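/- arXiv:1608.02664 — 4 statements merged into one kernel-verified Lean document; each statement's English description precedes it below -/
import Mathlib

section
/- If f₁ : c₁ → x and f₂ : c₂ → x are injections of finite sets with pullback p = {(a,b) : f₁(a) = f₂(b)}, then the pushout d = c₁ ⊔_p c₂ admits a unique injection h : d → x with h ∘ r_i = f_i, where r_i : c_i → d are the pushout maps. -/
/-- If `f₁ : c₁ → x` and `f₂ : c₂ → x` are injections of finite sets with pullback
`p = {(a,b) | f₁ a = f₂ b}`, then the pushout `d = c₁ ⊔_p c₂` (characterized by its
universal property in Set, with structure maps `r₁, r₂`) admits a unique injection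
`h : d → x` with `h ∘ rᵢ = fᵢ`. -/
theorem stmt_4 {c₁ c₂ x d : Type} [Finite c₁] [Finite c₂] [Finite x] [Finite d]
    (f₁ : c₁ → x) (f₂ : c₂ → x)
    (hf₁ : Function.Injective f₁) (hf₂ : Function.Injective f₂)
    (r₁ : c₁ → d) (r₂ : c₂ → d)
    (hcomm : ∀ q : {q : c₁ × c₂ // f₁ q.1 = f₂ q.2}, r₁ q.1.1 = r₂ q.1.2)
    -- `d` together with `r₁, r₂` is the pushout of `c₁ ← p → c₂` in Set:
    (hpo : ∀ (z : Type) (h₁ : c₁ → z) (h₂ : c₂ → z),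
      (∀ q : {q : c₁ × c₂ // f₁ q.1 = f₂ q.2}, h₁ q.1.1 = h₂ q.1.2) →
      ∃! h : d → z, h ∘ r₁ = h₁ ∧ h ∘ r₂ = h₂) :
    ∃! h : d → x, Function.Injective h ∧ h ∘ r₁ = f₁ ∧ h ∘ r₂ = f₂ := by
  classical
  -- joint surjectivity of r₁, r₂
  have hsurj : ∀ e : d, (∃ a, r₁ a = e) ∨ (∃ b, r₂ b = e) := by
    intro e
    by_contra hne
    push_neg at hne
    obtain ⟨h1, h2⟩ := hne
    obtain ⟨g, hg, hguniq⟩ := hpo Bool (fun _ => true) (fun _ => true) (fun _ => rfl)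
    have e1 : (fun _ : d => true) = g := hguniq (fun _ => true) ⟨rfl, rfl⟩
    have e2 : (fun e' => decide ((∃ a, r₁ a = e') ∨ (∃ b, r₂ b = e'))) = g := by
      refine hguniq _ ⟨?_, ?_⟩
      · funext t; simp only [Function.comp_apply, decide_eq_true_eq]
        exact Or.inl ⟨t, rfl⟩
      · funext t; simp only [Function.comp_apply, decide_eq_true_eq]
        exact Or.inr ⟨t, rfl⟩
    have := congrFun (e1.trans e2.symm) e
    simp at this
    rcases this with ⟨a, ha⟩ | ⟨b, hb⟩
    · exact h1 a ha
    · exact h2 b hb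
  obtain ⟨h, ⟨hh1, hh2⟩, huniq⟩ := hpo x f₁ f₂ (fun q => q.2)
  have hinj : Function.Injective h := by
    intro e e' heq
    have key : ∀ (e e' : d), h e = h e' →
        (∃ a, r₁ a = e) → ((∃ a, r₁ a = e') ∨ (∃ b, r₂ b = e')) → e = e' := by
      rintro e e' heq ⟨a, rfl⟩ (⟨a', rfl⟩ | ⟨b, rfl⟩)
      · have : f₁ a = f₁ a' := by
          rw [← hh1]; simpa using heq
        rw [hf₁ this]
      · have hq : f₁ a = f₂ b := by
          rw [← hh1, ← hh2]; simpa using heq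
        exact hcomm ⟨(a, b), hq⟩
    rcases hsurj e with he | he
    · exact key e e' heq he (hsurj e')
    · rcases hsurj e' with he' | he'
      · exact (key e' e heq.symm he' (Or.inr he)).symm
      · obtain ⟨b, rfl⟩ := he
        obtain ⟨b', rfl⟩ := he'
        have : f₂ b = f₂ b' := by
          rw [← hh2]; simpa using heq
        rw [hf₂ this]
  exact ⟨h, ⟨hinj, hh1, hh2⟩, fun h' hh' => huniq h' ⟨hh'.2.1, hh'.2.2⟩⟩
end

section
/- For finite sets c₁, c₂, there is a bijection, natural in the finite set x, between Inj(c₁,x) × Inj(c₂,x) and the disjoint union over isomorphism classes of finite sets d of (Inj(d,x) × PO_d(c₁,c₂))/Sym(d), where PO_d(c₁,c₂) is the set of pairs of injections g_i : c_i → d presenting d as a weak pushout of c₁ and c₂ over their pullback; moreover the bijection is equivariant for the right Sym(c₁) × Sym(c₂) action by precomposition. -/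
/-- The pullback of two injections `g₁ : c₁ ↪ d`, `g₂ : c₂ ↪ d`. -/
def Pb {c₁ c₂ d : Type*} (g₁ : c₁ ↪ d) (g₂ : c₂ ↪ d) : Type _ :=
  {q : c₁ × c₂ // g₁ q.1 = g₂ q.2}

/-- `(g₁, g₂)` presents `d` as a weak pushout of `c₁` and `c₂` over their pullback:
for every pullback square over the same span (injections `h₁ : c₁ ↪ z`, `h₂ : c₂ ↪ z`
commuting over the pullback of `(g₁,g₂)` and forming a pullback square), there is a
unique injection `d ↪ z` making everything commute. -/
def IsWeakPushoutPres {c₁ c₂ d : Type} (g₁ : c₁ ↪ d) (g₂ : c₂ ↪ d) : Prop :=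
  ∀ (z : Type) (h₁ : c₁ ↪ z) (h₂ : c₂ ↪ z),
    (∀ q : Pb g₁ g₂, h₁ q.1.1 = h₂ q.1.2) →
    (∀ (a : c₁) (b : c₂), h₁ a = h₂ b → ∃ q : Pb g₁ g₂, q.1.1 = a ∧ q.1.2 = b) →
    ∃! h : d ↪ z, h₁ = g₁.trans h ∧ h₂ = g₂.trans h

/-- `PO_d(c₁,c₂)` (for `d = Fin n`): pairs of injections presenting `d` as a weak
pushout of `c₁` and `c₂` over their pullback. -/
def PO (c₁ c₂ : Type) (n : ℕ) : Type :=
  {gg : (c₁ ↪ Fin n) × (c₂ ↪ Fin n) // IsWeakPushoutPres gg.1 gg.2}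

/-- The (diagonal) right action of `Sym(Fin n)` on `Inj(Fin n, x) × PO_{Fin n}(c₁,c₂)`:
precomposition on the first factor and postcomposition on the second. -/
def poRel (c₁ c₂ : Type) (x : Type) (n : ℕ) :
    ((Fin n ↪ x) × PO c₁ c₂ n) → ((Fin n ↪ x) × PO c₁ c₂ n) → Prop :=
  fun a b => ∃ σ : Equiv.Perm (Fin n),
    b.1 = σ.toEmbedding.trans a.1 ∧
    a.2.1.1 = b.2.1.1.trans σ.toEmbedding ∧
    a.2.1.2 = b.2.1.2.trans σ.toEmbedding

/-- Joint surjectivity implies the weak pushout presentation property. -/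
lemma pres_of_surj {c₁ c₂ : Type} {n : ℕ} (g₁ : c₁ ↪ Fin n) (g₂ : c₂ ↪ Fin n)
    (hs : ∀ d : Fin n, (∃ a, g₁ a = d) ∨ ∃ b, g₂ b = d) : IsWeakPushoutPres g₁ g₂ := by
  intro z h₁ h₂ hcomm hpb
  have key : ∀ d : Fin n, ∃ y : z,
      (∀ a, g₁ a = d → h₁ a = y) ∧ (∀ b, g₂ b = d → h₂ b = y) := by
    intro d
    rcases hs d with ⟨a, ha⟩ | ⟨b, hb⟩
    · refine ⟨h₁ a, fun a' ha' => by rw [g₁.injective (ha'.trans ha.symm)],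
        fun b hb => (hcomm ⟨(a, b), ha.trans hb.symm⟩).symm⟩
    · refine ⟨h₂ b, fun a ha => (hcomm ⟨(a, b), ha.trans hb.symm⟩),
        fun b' hb' => by rw [g₂.injective (hb'.trans hb.symm)]⟩
  choose h hh₁ hh₂ using key
  have hinj : Function.Injective h := by
    intro d d' hdd
    rcases hs d with ⟨a, ha⟩ | ⟨b, hb⟩ <;> rcases hs d' with ⟨a', ha'⟩ | ⟨b', hb'⟩
    · have : h₁ a = h₁ a' := by rw [hh₁ d a ha, hh₁ d' a' ha', hdd]
      rw [← ha, ← ha', h₁.injective this]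
    · have : h₁ a = h₂ b' := by rw [hh₁ d a ha, hh₂ d' b' hb', hdd]
      obtain ⟨q, hq1, hq2⟩ := hpb a b' this
      rw [← ha, ← hb', ← hq1, ← hq2, q.2]
    · have : h₁ a' = h₂ b := by rw [hh₁ d' a' ha', hh₂ d b hb, hdd]
      obtain ⟨q, hq1, hq2⟩ := hpb a' b this
      rw [← ha', ← hb, ← hq1, ← hq2, q.2]
    · have : h₂ b = h₂ b' := by rw [hh₂ d b hb, hh₂ d' b' hb', hdd]
      rw [← hb, ← hb', h₂.injective this]
  refine ⟨⟨h, hinj⟩, ⟨?_, ?_⟩, ?_⟩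
  · exact Function.Embedding.ext fun a => hh₁ (g₁ a) a rfl
  · exact Function.Embedding.ext fun b => hh₂ (g₂ b) b rfl
  · rintro h' ⟨e₁, e₂⟩
    refine Function.Embedding.ext fun d => ?_
    rcases hs d with ⟨a, ha⟩ | ⟨b, hb⟩
    · have : h' (g₁ a) = h₁ a := (congrFun (congrArg (fun e => e.toFun) e₁) a).symm
      rw [← ha]
      show h' (g₁ a) = h (g₁ a)
      rw [this, hh₁ (g₁ a) a rfl]
    · have : h' (g₂ b) = h₂ b := (congrFun (congrArg (fun e => e.toFun) e₂) b).symm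
      rw [← hb]
      show h' (g₂ b) = h (g₂ b)
      rw [this, hh₂ (g₂ b) b rfl]

/-- The weak pushout presentation property implies joint surjectivity. -/
lemma surj_of_pres {c₁ c₂ : Type} {n : ℕ} (g₁ : c₁ ↪ Fin n) (g₂ : c₂ ↪ Fin n)
    (hp : IsWeakPushoutPres g₁ g₂) :
    ∀ d : Fin n, (∃ a, g₁ a = d) ∨ ∃ b, g₂ b = d := by
  intro d
  obtain ⟨h, -, -⟩ := hp {d : Fin n // (∃ a, g₁ a = d) ∨ ∃ b, g₂ b = d}
    ⟨fun a => ⟨g₁ a, Or.inl ⟨a, rfl⟩⟩, fun a a' h => g₁.injective (congrArg Subtype.val h)⟩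
    ⟨fun b => ⟨g₂ b, Or.inr ⟨b, rfl⟩⟩, fun b b' h => g₂.injective (congrArg Subtype.val h)⟩
    (fun q => Subtype.ext q.2)
    (fun a b hab => ⟨⟨(a, b), congrArg Subtype.val hab⟩, rfl, rfl⟩)
  have hinj : Function.Injective (fun d : Fin n => (h d).val) :=
    fun d d' hdd => h.injective (Subtype.ext hdd)
  have hsurj := Finite.injective_iff_surjective.mp hinj
  obtain ⟨d₀, hd₀⟩ := hsurj d
  exact hd₀ ▸ (h d₀).2

/-- Composition map from the disjoint union to pairs of injections. -/
noncomputable def decodeFun (c₁ c₂ x : Type) :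
    (Σ n : ℕ, Quot (poRel c₁ c₂ x n)) → ((c₁ ↪ x) × (c₂ ↪ x)) :=
  fun s => Quot.lift (fun fg : (Fin s.1 ↪ x) × PO c₁ c₂ s.1 =>
      (fg.2.1.1.trans fg.1, fg.2.1.2.trans fg.1))
    (by
      rintro a b ⟨σ, hb1, hg1, hg2⟩
      refine Prod.ext ?_ ?_ <;> refine Function.Embedding.ext fun cc => ?_
      · show a.1 (a.2.1.1 cc) = b.1 (b.2.1.1 cc)
        rw [hg1, hb1]; rfl
      · show a.1 (a.2.1.2 cc) = b.1 (b.2.1.2 cc)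
        rw [hg2, hb1]; rfl) s.2

lemma decodeFun_mk (c₁ c₂ x : Type) (n : ℕ) (f : Fin n ↪ x) (g : PO c₁ c₂ n) :
    decodeFun c₁ c₂ x ⟨n, Quot.mk _ (f, g)⟩ = (g.1.1.trans f, g.1.2.trans f) := rfl

lemma decode_inj {c₁ c₂ x : Type} : Function.Injective (decodeFun c₁ c₂ x) := by
  rintro ⟨n, q⟩ ⟨n', q'⟩ h
  induction q using Quot.ind with | _ a =>
  induction q' using Quot.ind with | _ a' =>
  obtain ⟨f, g⟩ := a
  obtain ⟨f', g'⟩ := a'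
  rw [decodeFun_mk, decodeFun_mk] at h
  have h1 : g.1.1.trans f = g'.1.1.trans f' := congrArg Prod.fst h
  have h2 : g.1.2.trans f = g'.1.2.trans f' := congrArg Prod.snd h
  have h1' : ∀ a, f (g.1.1 a) = f' (g'.1.1 a) := fun a => congrFun (congrArg (fun e => e.toFun) h1) a
  have h2' : ∀ b, f (g.1.2 b) = f' (g'.1.2 b) := fun b => congrFun (congrArg (fun e => e.toFun) h2) b
  have hs := surj_of_pres g.1.1 g.1.2 g.2
  have hs' := surj_of_pres g'.1.1 g'.1.2 g'.2
  have ex : ∀ d : Fin n, ∃ d' : Fin n', f' d' = f d := by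
    intro d
    rcases hs d with ⟨a, ha⟩ | ⟨b, hb⟩
    · exact ⟨g'.1.1 a, by rw [← ha, h1' a]⟩
    · exact ⟨g'.1.2 b, by rw [← hb, h2' b]⟩
  have ex' : ∀ d' : Fin n', ∃ d : Fin n, f d = f' d' := by
    intro d'
    rcases hs' d' with ⟨a, ha⟩ | ⟨b, hb⟩
    · exact ⟨g.1.1 a, by rw [← ha, h1' a]⟩
    · exact ⟨g.1.2 b, by rw [← hb, h2' b]⟩
  choose σ hσ using ex
  choose σ' hσ' using ex'
  have left : ∀ d, σ' (σ d) = d := fun d => f.injective (by rw [hσ' (σ d), hσ d])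
  have right : ∀ d', σ (σ' d') = d' := fun d' => f'.injective (by rw [hσ (σ' d'), hσ' d'])
  have hnn : n = n' := by
    have : Nonempty (Fin n ≃ Fin n') := ⟨⟨σ, σ', left, right⟩⟩
    simpa using Fintype.card_congr this.some
  subst hnn
  have rel : poRel c₁ c₂ x n (f', g') (f, g) := by
    refine ⟨⟨σ, σ', left, right⟩, ?_, ?_, ?_⟩
    · exact Function.Embedding.ext fun d => (hσ d).symm
    · exact Function.Embedding.ext fun a => f'.injective (by
        show f' (g'.1.1 a) = f' (σ (g.1.1 a))
        rw [hσ (g.1.1 a), h1' a])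
    · exact Function.Embedding.ext fun b => f'.injective (by
        show f' (g'.1.2 b) = f' (σ (g.1.2 b))
        rw [hσ (g.1.2 b), h2' b])
  exact congrArg (fun q => (⟨n, q⟩ : Σ m, Quot (poRel c₁ c₂ x m))) (Quot.sound rel).symm

lemma decode_surj {c₁ c₂ : Type} [Finite c₁] [Finite c₂] (x : Type) :
    Function.Surjective (decodeFun c₁ c₂ x) := by
  rintro ⟨f₁, f₂⟩
  have : Finite {y : x // (∃ a, f₁ a = y) ∨ ∃ b, f₂ b = y} := by
    refine Finite.of_surjective (fun s : c₁ ⊕ c₂ => Sum.rec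
        (fun a => (⟨f₁ a, Or.inl ⟨a, rfl⟩⟩ : {y : x // (∃ a, f₁ a = y) ∨ ∃ b, f₂ b = y}))
        (fun b => ⟨f₂ b, Or.inr ⟨b, rfl⟩⟩) s) ?_
    rintro ⟨y, ⟨a, rfl⟩ | ⟨b, rfl⟩⟩
    · exact ⟨Sum.inl a, rfl⟩
    · exact ⟨Sum.inr b, rfl⟩
  obtain ⟨n, ⟨e⟩⟩ := Finite.exists_equiv_fin {y : x // (∃ a, f₁ a = y) ∨ ∃ b, f₂ b = y}
  refine ⟨⟨n, Quot.mk _ (e.symm.toEmbedding.trans (Function.Embedding.subtype _),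
    ⟨(⟨fun a => e ⟨f₁ a, Or.inl ⟨a, rfl⟩⟩,
        fun a a' h => f₁.injective (congrArg Subtype.val (e.injective h))⟩,
      ⟨fun b => e ⟨f₂ b, Or.inr ⟨b, rfl⟩⟩,
        fun b b' h => f₂.injective (congrArg Subtype.val (e.injective h))⟩),
     pres_of_surj _ _ ?_⟩)⟩, ?_⟩
  · intro d
    rcases (e.symm d).2 with ⟨a, ha⟩ | ⟨b, hb⟩
    · refine Or.inl ⟨a, ?_⟩
      show e ⟨f₁ a, Or.inl ⟨a, rfl⟩⟩ = d
      rw [show (⟨f₁ a, Or.inl ⟨a, rfl⟩⟩ :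
          {y : x // (∃ a, f₁ a = y) ∨ ∃ b, f₂ b = y}) = e.symm d from Subtype.ext ha,
        e.apply_symm_apply]
    · refine Or.inr ⟨b, ?_⟩
      show e ⟨f₂ b, Or.inr ⟨b, rfl⟩⟩ = d
      rw [show (⟨f₂ b, Or.inr ⟨b, rfl⟩⟩ :
          {y : x // (∃ a, f₁ a = y) ∨ ∃ b, f₂ b = y}) = e.symm d from Subtype.ext hb,
        e.apply_symm_apply]
  · refine (decodeFun_mk _ _ _ _ _ _).trans ?_
    refine Prod.ext ?_ ?_
    · refine Function.Embedding.ext fun a => ?_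
      show ((e.symm (e ⟨f₁ a, Or.inl ⟨a, rfl⟩⟩)) :
        {y : x // (∃ a, f₁ a = y) ∨ ∃ b, f₂ b = y}).val = f₁ a
      rw [e.symm_apply_apply]
    · refine Function.Embedding.ext fun b => ?_
      show ((e.symm (e ⟨f₂ b, Or.inr ⟨b, rfl⟩⟩)) :
        {y : x // (∃ a, f₁ a = y) ∨ ∃ b, f₂ b = y}).val = f₂ b
      rw [e.symm_apply_apply]

/-- For finite sets `c₁, c₂` there is a bijection, natural in the set `x`, between
`Inj(c₁,x) × Inj(c₂,x)` and the disjoint union over isomorphism classes of finite sets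
`d = Fin n` of `(Inj(d,x) × PO_d(c₁,c₂))/Sym(d)`, given by composition; moreover it is
equivariant for the right `Sym(c₁) × Sym(c₂)`-action by precomposition. -/
theorem stmt_5 {c₁ c₂ : Type} [Finite c₁] [Finite c₂] :
    ∃ E : ∀ x : Type, (Σ n : ℕ, Quot (poRel c₁ c₂ x n)) ≃ ((c₁ ↪ x) × (c₂ ↪ x)),
      -- the bijection is given by composition:
      (∀ (x : Type) (n : ℕ) (f : Fin n ↪ x) (g : PO c₁ c₂ n),
        E x ⟨n, Quot.mk _ (f, g)⟩ = (g.1.1.trans f, g.1.2.trans f)) ∧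
      -- naturality in `x` (with respect to injections `u : x ↪ x'`):
      (∀ (x x' : Type) (u : x ↪ x') (n : ℕ) (f : Fin n ↪ x) (g : PO c₁ c₂ n),
        E x' ⟨n, Quot.mk _ (f.trans u, g)⟩ =
          ((E x ⟨n, Quot.mk _ (f, g)⟩).1.trans u,
           (E x ⟨n, Quot.mk _ (f, g)⟩).2.trans u)) ∧
      -- equivariance for the right `Sym(c₁) × Sym(c₂)`-action by precomposition:
      (∀ (x : Type) (τ₁ : Equiv.Perm c₁) (τ₂ : Equiv.Perm c₂) (n : ℕ)
          (f : Fin n ↪ x) (g g' : PO c₁ c₂ n),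
        g'.1.1 = τ₁.toEmbedding.trans g.1.1 → g'.1.2 = τ₂.toEmbedding.trans g.1.2 →
        E x ⟨n, Quot.mk _ (f, g')⟩ =
          (τ₁.toEmbedding.trans (E x ⟨n, Quot.mk _ (f, g)⟩).1,
           τ₂.toEmbedding.trans (E x ⟨n, Quot.mk _ (f, g)⟩).2)) := by
  set F : ∀ x : Type, (Σ n : ℕ, Quot (poRel c₁ c₂ x n)) ≃ ((c₁ ↪ x) × (c₂ ↪ x)) :=
    fun x => Equiv.ofBijective (decodeFun c₁ c₂ x) ⟨decode_inj, decode_surj x⟩ with hF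
  have hcomp : ∀ (x : Type) (n : ℕ) (f : Fin n ↪ x) (g : PO c₁ c₂ n),
      F x ⟨n, Quot.mk _ (f, g)⟩ = (g.1.1.trans f, g.1.2.trans f) := fun _ _ _ _ => rfl
  refine ⟨F, hcomp, ?_, ?_⟩
  · intro x x' u n f g
    rw [hcomp, hcomp]
    rfl
  · intro x τ₁ τ₂ n f g g' hg1 hg2
    rw [hcomp, hcomp, hg1, hg2]
    rfl
end

section
/- For σ ∈ S_n, the number of fixed points of the induced action of σ on the set of k-element subsets of Fin n equals Σ_μ Π_i C(X_i(σ), μ_i), where the sum ranges over cycle types μ = (μ₁,…,μ_k) with Σ i·μᵢ = k. -/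
/-- `X_i(σ)`: the number of `i`-cycles of `σ`, i.e. the number of orbits of `⟨σ⟩`
on `Fin n` of size `i`. -/
noncomputable def cycleCount (n i : ℕ) (σ : Equiv.Perm (Fin n)) : ℕ :=
  (Finset.univ.filter fun a : Fin n => Function.minimalPeriod σ a = i).card / i

namespace Stmt13

open Finset Function Equiv

variable {n : ℕ} (σ : Equiv.Perm (Fin n))

/-- The orbit of `a` under `σ`. -/
def orb (a : Fin n) : Finset (Fin n) := Finset.univ.filter fun b => σ.SameCycle a b

/-- The set of orbits of `σ`. -/
def Orbs : Finset (Finset (Fin n)) := Finset.univ.image (orb σ)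

variable {σ}

lemma mem_orb {a b : Fin n} : b ∈ orb σ a ↔ σ.SameCycle a b := by
  simp [orb]

lemma self_mem_orb (a : Fin n) : a ∈ orb σ a := mem_orb.2 (Equiv.Perm.SameCycle.refl σ a)

lemma orb_nonempty (a : Fin n) : (orb σ a).Nonempty := ⟨a, self_mem_orb a⟩

lemma orb_eq_of_mem {a b : Fin n} (h : b ∈ orb σ a) : orb σ a = orb σ b := by
  rw [mem_orb] at h
  ext c
  simp only [mem_orb]
  exact ⟨fun hc => h.symm.trans hc, fun hc => h.trans hc⟩

lemma mem_periodicPts (a : Fin n) : a ∈ periodicPts σ := by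
  refine ⟨orderOf σ, orderOf_pos σ, ?_⟩
  show σ^[orderOf σ] a = a
  rw [Equiv.Perm.iterate_eq_pow, pow_orderOf_eq_one]
  rfl

lemma minimalPeriod_pos (a : Fin n) : 0 < minimalPeriod σ a :=
  minimalPeriod_pos_of_mem_periodicPts (mem_periodicPts a)

lemma orb_eq_image (a : Fin n) :
    orb σ a = (Finset.range (minimalPeriod σ a)).image fun j => (σ ^ j) a := by
  ext b
  simp only [mem_orb, Finset.mem_image, Finset.mem_range]
  constructor
  · intro h
    obtain ⟨i, _, hi⟩ := h.exists_pow_eq'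
    refine ⟨i % minimalPeriod σ a, Nat.mod_lt _ (minimalPeriod_pos a), ?_⟩
    have : (σ ^ (i % minimalPeriod σ a)) a = σ^[i % minimalPeriod σ a] a := rfl
    rw [this, iterate_mod_minimalPeriod_eq, Equiv.Perm.iterate_eq_pow, hi]
  · rintro ⟨j, _, rfl⟩
    exact ⟨(j : ℤ), by rw [zpow_natCast]⟩

lemma card_orb (a : Fin n) : (orb σ a).card = minimalPeriod σ a := by
  rw [orb_eq_image a, Finset.card_image_of_injOn, Finset.card_range]
  intro x hx y hy hxy
  simp only [Finset.coe_range, Set.mem_Iio] at hx hy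
  exact iterate_injOn_Iio_minimalPeriod hx hy hxy

lemma orb_card_pos (a : Fin n) : 0 < (orb σ a).card :=
  Finset.card_pos.2 (orb_nonempty a)

lemma mem_Orbs_iff {o : Finset (Fin n)} : o ∈ Orbs σ ↔ ∃ a, orb σ a = o := by
  simp [Orbs, eq_comm]

lemma orb_mem_Orbs (a : Fin n) : orb σ a ∈ Orbs σ := mem_Orbs_iff.2 ⟨a, rfl⟩

lemma eq_orb_of_mem_Orbs {o : Finset (Fin n)} (ho : o ∈ Orbs σ) {a : Fin n} (ha : a ∈ o) :
    o = orb σ a := by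
  obtain ⟨x, rfl⟩ := mem_Orbs_iff.1 ho
  exact orb_eq_of_mem ha

lemma Orbs_disjoint {o o' : Finset (Fin n)} (ho : o ∈ Orbs σ) (ho' : o' ∈ Orbs σ)
    (hne : o ≠ o') : Disjoint o o' := by
  rw [Finset.disjoint_left]
  intro a hao hao'
  exact hne ((eq_orb_of_mem_Orbs ho hao).trans (eq_orb_of_mem_Orbs ho' hao').symm)

lemma card_pos_of_mem_Orbs {o : Finset (Fin n)} (ho : o ∈ Orbs σ) : 0 < o.card := by
  obtain ⟨a, rfl⟩ := mem_Orbs_iff.1 ho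
  exact orb_card_pos a

lemma orb_image (a : Fin n) : (orb σ a).image σ = orb σ a := by
  apply Finset.eq_of_subset_of_card_le
  · intro b hb
    obtain ⟨c, hc, rfl⟩ := Finset.mem_image.1 hb
    rw [mem_orb] at hc ⊢
    obtain ⟨i, hi⟩ := hc
    exact ⟨1 + i, by rw [zpow_one_add, Equiv.Perm.mul_apply, hi]⟩
  · rw [Finset.card_image_of_injective _ σ.injective]

lemma orb_subset_of_invariant {S : Finset (Fin n)} (hS : S.image σ = S) {a : Fin n}
    (ha : a ∈ S) : orb σ a ⊆ S := by
  have hstep : ∀ j : ℕ, (σ ^ j) a ∈ S := by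
    intro j
    induction j with
    | zero => simpa using ha
    | succ j ih =>
      have : σ ((σ ^ j) a) ∈ S.image σ := Finset.mem_image_of_mem σ ih
      rw [hS] at this
      rw [pow_succ', Equiv.Perm.mul_apply]
      exact this
  intro b hb
  rw [orb_eq_image] at hb
  obtain ⟨j, _, rfl⟩ := Finset.mem_image.1 hb
  exact hstep j

lemma invariant_eq_biUnion {S : Finset (Fin n)} (hS : S.image σ = S) :
    ((Orbs σ).filter (· ⊆ S)).biUnion id = S := by
  apply Finset.Subset.antisymm
  · intro a ha
    obtain ⟨o, ho, hao⟩ := Finset.mem_biUnion.1 ha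
    exact (Finset.mem_filter.1 ho).2 hao
  · intro a ha
    exact Finset.mem_biUnion.2 ⟨orb σ a, Finset.mem_filter.2
      ⟨orb_mem_Orbs a, orb_subset_of_invariant hS ha⟩, self_mem_orb a⟩

lemma card_biUnion_orbs {T : Finset (Finset (Fin n))} (hT : T ⊆ Orbs σ) :
    (T.biUnion id).card = ∑ o ∈ T, o.card := by
  apply Finset.card_biUnion
  intro o ho o' ho' hne
  exact Orbs_disjoint (hT ho) (hT ho') hne

lemma filter_biUnion_eq {T : Finset (Finset (Fin n))} (hT : T ⊆ Orbs σ) :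
    (Orbs σ).filter (· ⊆ T.biUnion id) = T := by
  apply Finset.Subset.antisymm
  · intro o ho
    obtain ⟨ho1, ho2⟩ := Finset.mem_filter.1 ho
    obtain ⟨a, rfl⟩ := mem_Orbs_iff.1 ho1
    have ha : a ∈ T.biUnion id := ho2 (self_mem_orb a)
    obtain ⟨o', ho', hao'⟩ := Finset.mem_biUnion.1 ha
    have : o' = orb σ a := eq_orb_of_mem_Orbs (hT ho') hao'
    rwa [← this]
  · intro o ho
    exact Finset.mem_filter.2 ⟨hT ho, Finset.subset_biUnion_of_mem id ho⟩

lemma biUnion_invariant {T : Finset (Finset (Fin n))} (hT : T ⊆ Orbs σ) :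
    (T.biUnion id).image σ = T.biUnion id := by
  ext b
  simp only [Finset.mem_image, Finset.mem_biUnion, id]
  constructor
  · rintro ⟨c, ⟨o, ho, hco⟩, rfl⟩
    obtain ⟨a, rfl⟩ := mem_Orbs_iff.1 (hT ho)
    refine ⟨orb σ a, ho, ?_⟩
    rw [← orb_image a]
    exact Finset.mem_image_of_mem σ hco
  · rintro ⟨o, ho, hbo⟩
    obtain ⟨a, rfl⟩ := mem_Orbs_iff.1 (hT ho)
    rw [← orb_image a] at hbo
    obtain ⟨c, hc, rfl⟩ := Finset.mem_image.1 hbo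
    exact ⟨c, ⟨orb σ a, ho, hc⟩, rfl⟩

variable (σ) in
/-- Step 1: invariant `k`-subsets biject with sets of orbits of total size `k`. -/
lemma step1 (k : ℕ) :
    (Finset.univ.filter fun S : Finset (Fin n) => S.card = k ∧ S.image σ = S).card
      = ((Orbs σ).powerset.filter fun T => ∑ o ∈ T, o.card = k).card := by
  refine Finset.card_bij' (fun S _ => (Orbs σ).filter (· ⊆ S))
    (fun T _ => T.biUnion id) ?hi ?hj ?left ?right
  case hi =>
    intro S hS
    obtain ⟨-, hcard, hinv⟩ := Finset.mem_filter.1 hS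
    refine Finset.mem_filter.2 ⟨Finset.mem_powerset.2 (Finset.filter_subset _ _), ?_⟩
    rw [← card_biUnion_orbs (Finset.filter_subset _ _), invariant_eq_biUnion hinv, hcard]
  case hj =>
    intro T hT
    obtain ⟨hsub, hsum⟩ := Finset.mem_filter.1 hT
    rw [Finset.mem_powerset] at hsub
    refine Finset.mem_filter.2 ⟨Finset.mem_univ _, ?_, biUnion_invariant hsub⟩
    rw [card_biUnion_orbs hsub, hsum]
  case left =>
    intro S hS
    obtain ⟨-, -, hinv⟩ := Finset.mem_filter.1 hS
    exact invariant_eq_biUnion hinv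
  case right =>
    intro T hT
    obtain ⟨hsub, -⟩ := Finset.mem_filter.1 hT
    exact filter_biUnion_eq (Finset.mem_powerset.1 hsub)

lemma count_map_card {α : Type*} [DecidableEq α] (T : Finset α) (f : α → ℕ) (i : ℕ) :
    (T.val.map f).count i = (T.filter fun o => f o = i).card := by
  rw [Multiset.count_map]
  congr 1
  exact Multiset.filter_congr fun x _ => by constructor <;> exact Eq.symm

/-- a total function sending a set of orbits to a partition -/
noncomputable def toPart (k : ℕ) (T : Finset (Finset (Fin n))) : Nat.Partition k :=
  if hT : (∀ x ∈ T.val.map Finset.card, 0 < x) ∧ (T.val.map Finset.card).sum = k then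
    ⟨T.val.map Finset.card, fun hi => hT.1 _ hi, hT.2⟩
  else default

variable (σ) in
/-- Step 2: group subsets of orbits by the partition they induce. -/
lemma step2 (k : ℕ) :
    ((Orbs σ).powerset.filter fun T => ∑ o ∈ T, o.card = k).card
      = ∑ μ : Nat.Partition k,
          ((Orbs σ).powerset.filter fun T => T.val.map Finset.card = μ.parts).card := by
  classical
  rw [Finset.card_eq_sum_card_fiberwise
    (f := toPart k) (t := Finset.univ) (fun x _ => Finset.mem_univ _)]
  apply Finset.sum_congr rfl
  intro μ _
  congr 1
  ext T
  simp only [Finset.mem_filter, Finset.mem_powerset]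
  constructor
  · rintro ⟨⟨hsub, hsum⟩, hμ⟩
    refine ⟨hsub, ?_⟩
    have hpos : ∀ x ∈ T.val.map Finset.card, 0 < x := by
      intro x hx
      obtain ⟨o, ho, rfl⟩ := Multiset.mem_map.1 hx
      exact card_pos_of_mem_Orbs (hsub ho)
    have hsum' : (T.val.map Finset.card).sum = k := hsum
    rw [toPart, dif_pos ⟨hpos, hsum'⟩] at hμ
    exact congrArg Nat.Partition.parts hμ
  · rintro ⟨hsub, hparts⟩
    have hpos : ∀ x ∈ T.val.map Finset.card, 0 < x := by
      intro x hx
      obtain ⟨o, ho, rfl⟩ := Multiset.mem_map.1 hx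
      exact card_pos_of_mem_Orbs (hsub ho)
    have hsum' : (T.val.map Finset.card).sum = k := by rw [hparts]; exact μ.parts_sum
    refine ⟨⟨hsub, hsum'⟩, ?_⟩
    rw [toPart, dif_pos ⟨hpos, hsum'⟩]
    exact Nat.Partition.ext hparts

lemma parts_mem_Icc {k : ℕ} (μ : Nat.Partition k) {i : ℕ} (hi : i ∈ μ.parts) :
    i ∈ Finset.Icc 1 k := by
  obtain ⟨s, hs⟩ := Multiset.exists_cons_of_mem hi
  refine Finset.mem_Icc.2 ⟨μ.parts_pos hi, ?_⟩
  have : (i ::ₘ s).sum = k := by rw [← hs]; exact μ.parts_sum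
  rw [Multiset.sum_cons] at this
  omega

variable (σ) in
/-- Step 3: subsets of orbits with prescribed size-multiset are counted by binomials. -/
lemma step3 (k : ℕ) (μ : Nat.Partition k) :
    ((Orbs σ).powerset.filter fun T => T.val.map Finset.card = μ.parts).card
      = ∏ i ∈ Finset.Icc 1 k,
          (((Orbs σ).filter fun o => o.card = i).card.choose (μ.parts.count i)) := by
  classical
  rw [← Finset.prod_congr rfl fun i _ =>
    (Finset.card_powersetCard (μ.parts.count i) ((Orbs σ).filter fun o => o.card = i)),
    ← Finset.card_pi]
  refine Finset.card_bij' (fun T _ => fun i _ => T.filter fun o => o.card = i)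
    (fun g _ => (Finset.Icc 1 k).attach.biUnion fun i => g i.1 i.2) ?hi ?hj ?left ?right
  case hi =>
    intro T hT
    obtain ⟨hsub, hparts⟩ := Finset.mem_filter.1 hT
    rw [Finset.mem_powerset] at hsub
    rw [Finset.mem_pi]
    intro i hi
    rw [Finset.mem_powersetCard]
    constructor
    · intro o ho
      obtain ⟨hoT, hoc⟩ := Finset.mem_filter.1 ho
      exact Finset.mem_filter.2 ⟨hsub hoT, hoc⟩
    · rw [← count_map_card, hparts]
  case hj =>
    intro g hg
    rw [Finset.mem_pi] at hg
    have hsubs : ∀ (i : ℕ) (hi : i ∈ Finset.Icc 1 k),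
        g i hi ⊆ (Orbs σ).filter fun o => o.card = i := fun i hi =>
      (Finset.mem_powersetCard.1 (hg i hi)).1
    have hcards : ∀ (i : ℕ) (hi : i ∈ Finset.Icc 1 k), (g i hi).card = μ.parts.count i :=
      fun i hi => (Finset.mem_powersetCard.1 (hg i hi)).2
    set T := (Finset.Icc 1 k).attach.biUnion fun i => g i.1 i.2 with hTdef
    have hmemT : ∀ o, o ∈ T ↔ ∃ (i : ℕ) (hi : i ∈ Finset.Icc 1 k), o ∈ g i hi := by
      intro o
      rw [hTdef, Finset.mem_biUnion]
      constructor
      · rintro ⟨⟨i, hi⟩, -, ho⟩; exact ⟨i, hi, ho⟩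
      · rintro ⟨i, hi, ho⟩; exact ⟨⟨i, hi⟩, Finset.mem_attach _ _, ho⟩
    have hfilter : ∀ (j : ℕ) (hj : j ∈ Finset.Icc 1 k),
        (T.filter fun o => o.card = j) = g j hj := by
      intro j hj
      ext o
      rw [Finset.mem_filter, hmemT]
      constructor
      · rintro ⟨⟨i, hi, ho⟩, hcard⟩
        have : o.card = i := (Finset.mem_filter.1 (hsubs i hi ho)).2
        have hij : i = j := by omega
        subst hij
        exact ho
      · intro ho
        exact ⟨⟨j, hj, ho⟩, (Finset.mem_filter.1 (hsubs j hj ho)).2⟩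
    refine Finset.mem_filter.2 ⟨Finset.mem_powerset.2 ?_, ?_⟩
    · intro o ho
      obtain ⟨i, hi, hoi⟩ := (hmemT o).1 ho
      exact Finset.filter_subset _ _ (hsubs i hi hoi)
    · ext j
      rw [count_map_card]
      by_cases hj : j ∈ Finset.Icc 1 k
      · rw [hfilter j hj, hcards j hj]
      · have h1 : (T.filter fun o => o.card = j) = ∅ := by
          rw [Finset.filter_eq_empty_iff]
          intro o ho hoj
          obtain ⟨i, hi, hoi⟩ := (hmemT o).1 ho
          have : o.card = i := (Finset.mem_filter.1 (hsubs i hi hoi)).2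
          exact hj (by rw [← hoj, this]; exact hi)
        rw [h1]
        have h2 : j ∉ μ.parts := fun hjp => hj (parts_mem_Icc μ hjp)
        rw [Finset.card_empty, eq_comm, Multiset.count_eq_zero]
        exact h2
  case left =>
    intro T hT
    obtain ⟨hsub, hparts⟩ := Finset.mem_filter.1 hT
    rw [Finset.mem_powerset] at hsub
    ext o
    rw [Finset.mem_biUnion]
    constructor
    · rintro ⟨⟨i, hi⟩, -, ho⟩
      exact (Finset.mem_filter.1 ho).1
    · intro ho
      have hoc : o.card ∈ μ.parts := by
        rw [← hparts]
        exact Multiset.mem_map_of_mem _ ho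
      exact ⟨⟨o.card, parts_mem_Icc μ hoc⟩, Finset.mem_attach _ _,
        Finset.mem_filter.2 ⟨ho, rfl⟩⟩
  case right =>
    intro g hg
    rw [Finset.mem_pi] at hg
    have hsubs : ∀ (i : ℕ) (hi : i ∈ Finset.Icc 1 k),
        g i hi ⊆ (Orbs σ).filter fun o => o.card = i := fun i hi =>
      (Finset.mem_powersetCard.1 (hg i hi)).1
    funext j hj
    ext o
    rw [Finset.mem_filter, Finset.mem_biUnion]
    constructor
    · rintro ⟨⟨⟨i, hi⟩, -, ho⟩, hcard⟩
      have : o.card = i := (Finset.mem_filter.1 (hsubs i hi ho)).2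
      have hij : i = j := by omega
      subst hij
      exact ho
    · intro ho
      exact ⟨⟨⟨j, hj⟩, Finset.mem_attach _ _, ho⟩,
        (Finset.mem_filter.1 (hsubs j hj ho)).2⟩

variable (σ) in
lemma cycleCount_eq (i : ℕ) (hi : 1 ≤ i) :
    cycleCount n i σ = ((Orbs σ).filter fun o => o.card = i).card := by
  have key : (Finset.univ.filter fun a : Fin n => Function.minimalPeriod σ a = i).card
      = ∑ o ∈ (Orbs σ).filter (fun o => o.card = i),
          ((Finset.univ.filter fun a : Fin n => Function.minimalPeriod σ a = i).filter
            fun a => orb σ a = o).card := by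
    apply Finset.card_eq_sum_card_fiberwise
    intro a ha
    rw [Finset.mem_coe, Finset.mem_filter] at ha
    exact Finset.mem_filter.2 ⟨orb_mem_Orbs a, by rw [card_orb, ha.2]⟩
  have fib : ∀ o ∈ (Orbs σ).filter (fun o => o.card = i),
      ((Finset.univ.filter fun a : Fin n => Function.minimalPeriod σ a = i).filter
        fun a => orb σ a = o) = o := by
    intro o ho
    obtain ⟨hoO, hoc⟩ := Finset.mem_filter.1 ho
    ext a
    simp only [Finset.mem_filter, Finset.mem_univ, true_and]
    constructor
    · rintro ⟨-, rfl⟩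
      exact self_mem_orb a
    · intro ha
      have h1 : o = orb σ a := eq_orb_of_mem_Orbs hoO ha
      refine ⟨?_, h1.symm⟩
      rw [← card_orb, ← h1, hoc]
  have : (Finset.univ.filter fun a : Fin n => Function.minimalPeriod σ a = i).card
      = ((Orbs σ).filter fun o => o.card = i).card * i := by
    rw [key, Finset.sum_congr rfl fun o ho => by
      rw [fib o ho, (Finset.mem_filter.1 ho).2], Finset.sum_const, smul_eq_mul]
  rw [cycleCount, this, Nat.mul_div_cancel _ hi]

end Stmt13

/-- The number of fixed points of `σ` acting on `k`-element subsets of `Fin n` equals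
`Σ_μ Π_i C(X_i(σ), μ_i)`, the sum ranging over cycle types `μ` with `Σ i·μᵢ = k`
(i.e. over partitions of `k`, with `μᵢ` the number of parts equal to `i`). -/
theorem stmt_13 (n k : ℕ) (σ : Equiv.Perm (Fin n)) :
    (Finset.univ.filter fun S : Finset (Fin n) => S.card = k ∧ S.image σ = S).card
      = ∑ μ : Nat.Partition k,
          ∏ i ∈ Finset.Icc 1 k, (cycleCount n i σ).choose (μ.parts.count i) := by
  rw [Stmt13.step1 σ k, Stmt13.step2 σ k]
  apply Finset.sum_congr rfl
  intro μ _
  rw [Stmt13.step3 σ k μ]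
  apply Finset.prod_congr rfl
  intro i hi
  rw [Stmt13.cycleCount_eq σ i (Finset.mem_Icc.1 hi).1]
end

section
/- Let c ≤ d ≤ e be natural numbers regarded as objects of FI (finite sets and injections), and V a representation of S_c over a field k. Then the map on coinvariants (Ind_c(V)_d)/S_d → (Ind_c(V)_e)/S_e induced by any injection Fin d → Fin e is an isomorphism, and both sides are naturally isomorphic to V/S_c. -/
open scoped TensorProduct

variable {k : Type} [Field k] {c : ℕ} {V : Type} [AddCommGroup V] [Module k V]

/-- `k[Inj(Fin c, Fin n)] ⊗_k V`, the ambient space of `Ind_c(V)_n`. -/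
def bigSpace (k : Type) [Field k] (c : ℕ) (V : Type) [AddCommGroup V] [Module k V]
    (n : ℕ) : Type :=
  ((Fin c ↪ Fin n) →₀ k) ⊗[k] V

noncomputable instance (n : ℕ) : AddCommGroup (bigSpace k c V n) :=
  inferInstanceAs (AddCommGroup (((Fin c ↪ Fin n) →₀ k) ⊗[k] V))

noncomputable instance (n : ℕ) : Module k (bigSpace k c V n) :=
  inferInstanceAs (Module k (((Fin c ↪ Fin n) →₀ k) ⊗[k] V))

/-- The relations defining `(Ind_c(V)_n)/S_n` inside `k[Inj(Fin c, Fin n)] ⊗_k V`: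
the `⊗_{k[S_c]}`-relations `(f ∘ τ) ⊗ v - f ⊗ (τ·v)` together with the `S_n`-coinvariance
relations `(σ ∘ f) ⊗ v - f ⊗ v`. -/
noncomputable def relSub (ρ : Representation k (Equiv.Perm (Fin c)) V) (n : ℕ) :
    Submodule k (bigSpace k c V n) :=
  Submodule.span k
    ({x | ∃ (f : Fin c ↪ Fin n) (τ : Equiv.Perm (Fin c)) (v : V),
        x = Finsupp.single (τ.toEmbedding.trans f) (1 : k) ⊗ₜ[k] v
              - Finsupp.single f (1 : k) ⊗ₜ[k] (ρ τ v)} ∪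
     {x | ∃ (f : Fin c ↪ Fin n) (σ : Equiv.Perm (Fin n)) (v : V),
        x = Finsupp.single (f.trans σ.toEmbedding) (1 : k) ⊗ₜ[k] v
              - Finsupp.single f (1 : k) ⊗ₜ[k] v})

/-- The map `k[Inj(Fin c, Fin d)] ⊗ V → k[Inj(Fin c, Fin e)] ⊗ V` induced by an
injection `j : Fin d ↪ Fin e` (postcomposition on injections). -/
noncomputable def baseMap (k : Type) [Field k] (c : ℕ) (V : Type) [AddCommGroup V]
    [Module k V] {d e : ℕ} (j : Fin d ↪ Fin e) :
    bigSpace k c V d →ₗ[k] bigSpace k c V e :=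
  TensorProduct.map (Finsupp.lmapDomain k k (fun f : Fin c ↪ Fin d => f.trans j))
    LinearMap.id

/-- The span of `{v - τ·v}`; the coinvariants `V/S_c` are the quotient by it. -/
def coinvSub (ρ : Representation k (Equiv.Perm (Fin c)) V) : Submodule k V :=
  Submodule.span k {x | ∃ (τ : Equiv.Perm (Fin c)) (v : V), x = v - ρ τ v}


section Aux

variable (ρ : Representation k (Equiv.Perm (Fin c)) V)

noncomputable def toCoinv (n : ℕ) : bigSpace k c V n →ₗ[k] V ⧸ coinvSub ρ :=
  TensorProduct.lift (Finsupp.lsum k fun _ : Fin c ↪ Fin n =>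
    LinearMap.toSpanSingleton k (V →ₗ[k] V ⧸ coinvSub ρ) (coinvSub ρ).mkQ)

lemma toCoinv_single {n : ℕ} (f : Fin c ↪ Fin n) (a : k) (v : V) :
    toCoinv ρ n (Finsupp.single f a ⊗ₜ[k] v)
      = a • (Submodule.Quotient.mk v : V ⧸ coinvSub ρ) := by
  show TensorProduct.lift (Finsupp.lsum k fun _ : Fin c ↪ Fin n =>
      LinearMap.toSpanSingleton k (V →ₗ[k] V ⧸ coinvSub ρ) (coinvSub ρ).mkQ)
      (Finsupp.single f a ⊗ₜ[k] v) = a • (Submodule.Quotient.mk v : V ⧸ coinvSub ρ)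
  rw [TensorProduct.lift.tmul, Finsupp.lsum_single, LinearMap.toSpanSingleton_apply,
    LinearMap.smul_apply, Submodule.mkQ_apply]

lemma exists_perm {n : ℕ} (f g : Fin c ↪ Fin n) :
    ∃ σ : Equiv.Perm (Fin n), g.trans σ.toEmbedding = f := by
  classical
  let e : {x // x ∈ Set.range g} ≃ {x // x ∈ Set.range f} :=
    (Equiv.ofInjective g g.injective).symm.trans (Equiv.ofInjective f f.injective)
  refine ⟨e.extendSubtype, ?_⟩
  ext a
  have h1 : e.extendSubtype (g a) = ↑(e ⟨g a, ⟨a, rfl⟩⟩) :=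
    e.extendSubtype_apply_of_mem (g a) ⟨a, rfl⟩
  simp [Function.Embedding.trans_apply, h1, e]

lemma mem_rel1 {n : ℕ} (f : Fin c ↪ Fin n) (τ : Equiv.Perm (Fin c)) (v : V) :
    Finsupp.single (τ.toEmbedding.trans f) (1 : k) ⊗ₜ[k] v
      - Finsupp.single f (1 : k) ⊗ₜ[k] (ρ τ v) ∈ relSub ρ n :=
  Submodule.subset_span (Or.inl ⟨f, τ, v, rfl⟩)

lemma mem_rel2 {n : ℕ} (f : Fin c ↪ Fin n) (σ : Equiv.Perm (Fin n)) (v : V) :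
    Finsupp.single (f.trans σ.toEmbedding) (1 : k) ⊗ₜ[k] v
      - Finsupp.single f (1 : k) ⊗ₜ[k] v ∈ relSub ρ n :=
  Submodule.subset_span (Or.inr ⟨f, σ, v, rfl⟩)

lemma diff_mem {n : ℕ} (f g : Fin c ↪ Fin n) (v : V) :
    Finsupp.single f (1 : k) ⊗ₜ[k] v - Finsupp.single g (1 : k) ⊗ₜ[k] v ∈ relSub ρ n := by
  obtain ⟨σ, hσ⟩ := exists_perm f g
  have h := mem_rel2 ρ g σ v
  rwa [hσ] at h

lemma mk_single_eq {n : ℕ} (f g : Fin c ↪ Fin n) (v : V) :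
    (Submodule.Quotient.mk (Finsupp.single f (1 : k) ⊗ₜ[k] v)
        : bigSpace k c V n ⧸ relSub ρ n)
      = Submodule.Quotient.mk (Finsupp.single g (1 : k) ⊗ₜ[k] v) := by
  erw [Submodule.Quotient.eq]
  exact diff_mem ρ f g v

lemma relSub_le_ker (n : ℕ) : relSub ρ n ≤ LinearMap.ker (toCoinv ρ n) := by
  rw [relSub, Submodule.span_le]
  rintro x (⟨f, τ, v, rfl⟩ | ⟨f, σ, v, rfl⟩) <;>
    erw [SetLike.mem_coe, LinearMap.mem_ker, map_sub, toCoinv_single, toCoinv_single] <;>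
    simp only [one_smul]
  · rw [← Submodule.Quotient.mk_sub, Submodule.Quotient.mk_eq_zero]
    exact Submodule.subset_span ⟨τ, v, rfl⟩
  · exact sub_self _

noncomputable def quotToCoinv (n : ℕ) :
    (bigSpace k c V n ⧸ relSub ρ n) →ₗ[k] V ⧸ coinvSub ρ :=
  Submodule.liftQ _ (toCoinv ρ n) (relSub_le_ker ρ n)

lemma quotToCoinv_mk {n : ℕ} (f : Fin c ↪ Fin n) (a : k) (v : V) :
    quotToCoinv ρ n (Submodule.Quotient.mk (Finsupp.single f a ⊗ₜ[k] v))
      = a • (Submodule.Quotient.mk v : V ⧸ coinvSub ρ) := by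
  erw [quotToCoinv, Submodule.liftQ_apply]
  exact toCoinv_single ρ f a v

noncomputable def fromCoinv (n : ℕ) (f₀ : Fin c ↪ Fin n) :
    (V ⧸ coinvSub ρ) →ₗ[k] bigSpace k c V n ⧸ relSub ρ n :=
  Submodule.liftQ _ ((relSub ρ n).mkQ.comp
    (TensorProduct.mk k ((Fin c ↪ Fin n) →₀ k) V (Finsupp.single f₀ 1))) (by
      rw [coinvSub, Submodule.span_le]
      rintro x ⟨τ, v, rfl⟩
      simp only [SetLike.mem_coe, LinearMap.mem_ker, LinearMap.comp_apply,
        TensorProduct.mk_apply, Submodule.mkQ_apply, Submodule.Quotient.mk_eq_zero]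
      apply (Submodule.Quotient.mk_eq_zero (relSub ρ n)).mpr
      show Finsupp.single f₀ (1 : k) ⊗ₜ[k] (v - ρ τ v) ∈ relSub ρ n
      rw [TensorProduct.tmul_sub]
      have h3 := sub_mem (mem_rel1 ρ f₀ τ v) (diff_mem ρ (τ.toEmbedding.trans f₀) f₀ v)
      have heq : Finsupp.single f₀ (1 : k) ⊗ₜ[k] v - Finsupp.single f₀ (1 : k) ⊗ₜ[k] (ρ τ v)
          = (Finsupp.single (τ.toEmbedding.trans f₀) (1 : k) ⊗ₜ[k] v
              - Finsupp.single f₀ (1 : k) ⊗ₜ[k] (ρ τ v))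
            - (Finsupp.single (τ.toEmbedding.trans f₀) (1 : k) ⊗ₜ[k] v
              - Finsupp.single f₀ (1 : k) ⊗ₜ[k] v) := by abel
      rw [heq]
      exact h3)

lemma fromCoinv_mk {n : ℕ} (f₀ : Fin c ↪ Fin n) (v : V) :
    fromCoinv ρ n f₀ (Submodule.Quotient.mk v)
      = Submodule.Quotient.mk (Finsupp.single f₀ (1 : k) ⊗ₜ[k] v) := by
  rw [fromCoinv, Submodule.liftQ_apply]
  rfl

lemma single_tmul_smul {n : ℕ} (f : Fin c ↪ Fin n) (a : k) (v : V) :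
    (Finsupp.single f a ⊗ₜ[k] v : bigSpace k c V n)
      = a • (Finsupp.single f (1 : k) ⊗ₜ[k] v) := by
  rw [TensorProduct.smul_tmul', Finsupp.smul_single', mul_one]

noncomputable def coinvEquiv (n : ℕ) (hcn : c ≤ n) :
    (bigSpace k c V n ⧸ relSub ρ n) ≃ₗ[k] V ⧸ coinvSub ρ :=
  LinearEquiv.ofLinear (quotToCoinv ρ n)
    (fromCoinv ρ n ⟨Fin.castLE hcn, Fin.castLE_injective hcn⟩)
    (by
      apply Submodule.linearMap_qext
      ext v
      simp only [LinearMap.comp_apply, Submodule.mkQ_apply, LinearMap.id_apply]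
      rw [fromCoinv_mk]
      exact (quotToCoinv_mk ρ _ 1 v).trans (one_smul k _))
    (by
      apply Submodule.linearMap_qext
      apply TensorProduct.ext'
      intro x v
      induction x using Finsupp.induction_linear with
      | zero =>
        rw [TensorProduct.zero_tmul]
        exact (map_zero _).trans (map_zero _).symm
      | add f g hf hg =>
        rw [TensorProduct.add_tmul]
        exact (map_add _ _ _).trans ((congrArg₂ (· + ·) hf hg).trans (map_add _ _ _).symm)
      | single f a =>
        show fromCoinv ρ n _ (quotToCoinv ρ n (Submodule.Quotient.mk (Finsupp.single f a ⊗ₜ[k] v)))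
          = Submodule.Quotient.mk (Finsupp.single f a ⊗ₜ[k] v)
        rw [quotToCoinv_mk, map_smul, fromCoinv_mk]
        erw [show (Submodule.Quotient.mk (Finsupp.single f a ⊗ₜ[k] v)
            : bigSpace k c V n ⧸ relSub ρ n)
          = a • (Submodule.Quotient.mk (Finsupp.single f (1 : k) ⊗ₜ[k] v)
            : bigSpace k c V n ⧸ relSub ρ n) by
            exact (congrArg (Submodule.Quotient.mk (p := relSub ρ n)) (single_tmul_smul f a v)).trans
              (Submodule.Quotient.mk_smul (relSub ρ n) a _)]
        erw [mk_single_eq ρ _ f v]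
        rfl)

lemma baseMap_single {n m : ℕ} (j : Fin n ↪ Fin m) (f : Fin c ↪ Fin n) (a : k) (v : V) :
    baseMap k c V j (Finsupp.single f a ⊗ₜ[k] v)
      = Finsupp.single (f.trans j) a ⊗ₜ[k] v := by
  show TensorProduct.map (Finsupp.lmapDomain k k fun f : Fin c ↪ Fin n => f.trans j)
      LinearMap.id (Finsupp.single f a ⊗ₜ[k] v) = _
  rw [TensorProduct.map_tmul, Finsupp.lmapDomain_apply, Finsupp.mapDomain_single,
    LinearMap.id_apply]

lemma baseMap_rel {n m : ℕ} (j : Fin n ↪ Fin m) :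
    relSub ρ n ≤ Submodule.comap (baseMap k c V j) (relSub ρ m) := by
  rw [relSub, Submodule.span_le]
  rintro x (⟨f, τ, v, rfl⟩ | ⟨f, σ, v, rfl⟩) <;>
    erw [SetLike.mem_coe, Submodule.mem_comap, map_sub, baseMap_single, baseMap_single]
  · exact mem_rel1 ρ (f.trans j) τ v
  · exact diff_mem ρ ((f.trans σ.toEmbedding).trans j) (f.trans j) v


end Aux

/-- Let `c ≤ d ≤ e` be objects of `FI` and `V` a representation of `S_c` over a field
`k`, with `Ind_c(V)_n := k[Inj(Fin c, Fin n)] ⊗_{k[S_c]} V`.  The map on coinvariants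
`(Ind_c(V)_d)/S_d → (Ind_c(V)_e)/S_e` induced by any injection `Fin d ↪ Fin e` is a
(unique) well-defined isomorphism, and both sides are isomorphic to `V/S_c`. -/

theorem stmt_19 (ρ : Representation k (Equiv.Perm (Fin c)) V) {d e : ℕ}
    (hcd : c ≤ d) (hde : d ≤ e) (j : Fin d ↪ Fin e) :
    (∃ φ : (bigSpace k c V d ⧸ relSub ρ d) →ₗ[k] (bigSpace k c V e ⧸ relSub ρ e),
      φ.comp (relSub ρ d).mkQ = ((relSub ρ e).mkQ).comp (baseMap k c V j) ∧
      Function.Bijective φ ∧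
      ∀ φ' : (bigSpace k c V d ⧸ relSub ρ d) →ₗ[k] (bigSpace k c V e ⧸ relSub ρ e),
        φ'.comp (relSub ρ d).mkQ = ((relSub ρ e).mkQ).comp (baseMap k c V j) → φ' = φ) ∧
    Nonempty ((bigSpace k c V d ⧸ relSub ρ d) ≃ₗ[k] (V ⧸ coinvSub ρ)) ∧
    Nonempty ((bigSpace k c V e ⧸ relSub ρ e) ≃ₗ[k] (V ⧸ coinvSub ρ)) := by
  classical
  have hce : c ≤ e := hcd.trans hde
  let φ : (bigSpace k c V d ⧸ relSub ρ d) →ₗ[k] (bigSpace k c V e ⧸ relSub ρ e) :=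
    Submodule.mapQ _ _ (baseMap k c V j) (baseMap_rel ρ j)
  have hφ : φ.comp (relSub ρ d).mkQ = ((relSub ρ e).mkQ).comp (baseMap k c V j) :=
    Submodule.mapQ_mkQ _ _ _
  have hkey : (quotToCoinv ρ e).comp φ = quotToCoinv ρ d := by
    apply Submodule.linearMap_qext
    apply TensorProduct.ext'
    intro x v
    induction x using Finsupp.induction_linear with
    | zero => rw [TensorProduct.zero_tmul]; exact (map_zero _).trans (map_zero _).symm
    | add f g hf hg => rw [TensorProduct.add_tmul]
                       exact (map_add _ _ _).trans ((congrArg₂ (· + ·) hf hg).trans (map_add _ _ _).symm)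
    | single f a =>
      show quotToCoinv ρ e (φ (Submodule.Quotient.mk (Finsupp.single f a ⊗ₜ[k] v)))
        = quotToCoinv ρ d (Submodule.Quotient.mk (Finsupp.single f a ⊗ₜ[k] v))
      rw [show φ (Submodule.Quotient.mk (Finsupp.single f a ⊗ₜ[k] v))
          = Submodule.Quotient.mk (baseMap k c V j (Finsupp.single f a ⊗ₜ[k] v))
        from rfl, baseMap_single, quotToCoinv_mk, quotToCoinv_mk]
  have hkey' : ∀ x, quotToCoinv ρ e (φ x) = quotToCoinv ρ d x :=
    fun x => LinearMap.congr_fun hkey x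
  have hED : ∀ x, quotToCoinv ρ d x = coinvEquiv ρ d hcd x := fun _ => rfl
  have hEE : ∀ x, quotToCoinv ρ e x = coinvEquiv ρ e hce x := fun _ => rfl
  refine ⟨⟨φ, hφ, ⟨?_, ?_⟩, ?_⟩, ⟨coinvEquiv ρ d hcd⟩, ⟨coinvEquiv ρ e hce⟩⟩
  · intro a b hab
    have : quotToCoinv ρ d a = quotToCoinv ρ d b := by
      rw [← hkey', ← hkey', hab]
    rw [hED, hED] at this
    exact (coinvEquiv ρ d hcd).injective this
  · intro y
    refine ⟨(coinvEquiv ρ d hcd).symm (coinvEquiv ρ e hce y), ?_⟩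
    apply (coinvEquiv ρ e hce).injective
    rw [← hEE, hkey', hED, LinearEquiv.apply_symm_apply]
  · intro φ' h'
    refine LinearMap.ext fun x => ?_
    obtain ⟨y, rfl⟩ := Submodule.mkQ_surjective _ x
    exact LinearMap.congr_fun (h'.trans hφ.symm) y
end
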